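/- Let G be a finite weighted graph with symmetric nonnegative weights w and positive degrees d i = ∑ j w i j. For a nonempty proper subset S of vertices, define the conductance φ(S) = (∑_{i ∈ S, j ∉ S} w i j) / (∑_{i ∈ S} d i). If λ₂ is the second smallest eigenvalue of the normalized Laplacian, then λ₂/2 ≤ φ(S) for every S with vol(S) ≤ vol(V)/2 implies λ₂/2 ≤ φ(G), where φ(G) is the minimum conductance over such S. Prove the easy direction of Cheeger's inequality: λ₂ ≤ 2 φ(G). -/

import Mathlib

open Matrix in
lemma second_eig_bound {n : ℕ} (hn : 2 ≤ n) (A : Matrix (Fin n) (Fin n) ℝ)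
    (hA : A.IsHermitian) (σ : Equiv.Perm (Fin n))
    (hmono : Monotone (hA.eigenvalues ∘ σ))
    (hpsd : ∀ z : Fin n → ℝ, 0 ≤ z ⬝ᵥ A.mulVec z)
    (v x : Fin n → ℝ) (hv0 : v ≠ 0) (hAv : A.mulVec v = 0) (horth : v ⬝ᵥ x = 0) :
    hA.eigenvalues (σ ⟨1, by linarith⟩) * (x ⬝ᵥ x) ≤ x ⬝ᵥ A.mulVec x := by
  classical
  set μ := hA.eigenvalues (σ ⟨1, by omega⟩) with hμ
  set u := hA.eigenvectorBasis with hu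
  set U : Fin n → (Fin n → ℝ) := fun i => ⇑(u i) with hU
  have key : ∀ p q : Fin n → ℝ, p ⬝ᵥ q = ∑ i, (p ⬝ᵥ U i) * (U i ⬝ᵥ q) := by
    intro p q
    have h1 := u.sum_inner_mul_inner (𝕜 := ℝ)
      ((WithLp.equiv 2 (Fin n → ℝ)).symm p) ((WithLp.equiv 2 (Fin n → ℝ)).symm q)
    simp only [PiLp.inner_apply, RCLike.inner_apply, starRingEnd_apply, star_trivial,
      WithLp.equiv_symm_apply] at h1
    simp only [dotProduct, hU]
    simpa only [mul_comm] using h1.symm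
  have hsymm : ∀ (z : Fin n → ℝ) i, U i ⬝ᵥ A.mulVec z
      = hA.eigenvalues i * (U i ⬝ᵥ z) := by
    intro z i
    have ht : Aᵀ = A := by
      have := hA.eq; rwa [Matrix.conjTranspose_eq_transpose_of_trivial] at this
    rw [dotProduct_mulVec, ← mulVec_transpose, ht, hU]
    rw [hA.mulVec_eigenvectorBasis, smul_dotProduct]
    rfl
  set c : Fin n → ℝ := fun i => U i ⬝ᵥ x with hc
  have hxx : x ⬝ᵥ x = ∑ i, c i ^ 2 := by
    rw [key x x]
    refine Finset.sum_congr rfl fun i _ => ?_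
    rw [dotProduct_comm, sq]
  have hxAx : x ⬝ᵥ A.mulVec x = ∑ i, hA.eigenvalues i * c i ^ 2 := by
    rw [key x (A.mulVec x)]
    refine Finset.sum_congr rfl fun i _ => ?_
    rw [hsymm, dotProduct_comm x (U i)]; show (c i) * (_ * c i) = _; ring
  by_cases hμ0 : μ ≤ 0
  · have hxx0 : (0:ℝ) ≤ x ⬝ᵥ x := by rw [hxx]; positivity
    exact (mul_nonpos_of_nonpos_of_nonneg hμ0 hxx0).trans (hpsd x)
  push_neg at hμ0
  have hge : ∀ i : Fin n, i ≠ σ ⟨0, by omega⟩ → μ ≤ hA.eigenvalues i := by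
    intro i hi
    have h1 : σ.symm i ≠ ⟨0, by omega⟩ := fun h => hi (by rw [← h]; simp)
    have h2 : (⟨1, by omega⟩ : Fin n) ≤ σ.symm i := by
      rw [Fin.le_def]
      have := Fin.val_ne_of_ne h1
      simp only [Fin.val_mk] at this ⊢
      omega
    simpa using hmono h2
  set b : Fin n → ℝ := fun i => U i ⬝ᵥ v with hb
  have hbzero : ∀ i, i ≠ σ ⟨0, by omega⟩ → b i = 0 := by
    intro i hi
    have h0 : U i ⬝ᵥ A.mulVec v = 0 := by rw [hAv]; simp
    rw [hsymm] at h0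
    exact (mul_eq_zero.1 h0).resolve_left
      (ne_of_gt (lt_of_lt_of_le hμ0 (hge i hi)))
  have hbne : b (σ ⟨0, by omega⟩) ≠ 0 := by
    intro hbz
    apply hv0
    have hvv : v ⬝ᵥ v = 0 := by
      rw [key v v]
      apply Finset.sum_eq_zero
      intro i _
      rw [dotProduct_comm v (U i)]
      show b i * b i = 0
      by_cases hi : i = σ ⟨0, by omega⟩
      · rw [hi, hbz]; ring
      · rw [hbzero i hi]; ring
    funext j
    have hj : v j * v j = 0 :=
      (Finset.sum_eq_zero_iff_of_nonneg (fun k _ => mul_self_nonneg (v k))).1 hvv j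
        (Finset.mem_univ j)
    simpa using mul_self_eq_zero.1 hj
  have hczero : c (σ ⟨0, by omega⟩) = 0 := by
    have h0 : (0:ℝ) = ∑ i, b i * c i := by
      rw [← horth, key v x]
      refine Finset.sum_congr rfl fun i _ => ?_
      rw [dotProduct_comm v (U i)]
    have h1 : ∑ i, b i * c i = b (σ ⟨0, by omega⟩) * c (σ ⟨0, by omega⟩) := by
      rw [Finset.sum_eq_single (σ ⟨0, by omega⟩)]
      · intro i _ hi; rw [hbzero i hi]; ring
      · intro h; exact absurd (Finset.mem_univ _) h
    rw [h1] at h0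
    exact (mul_eq_zero.1 h0.symm).resolve_left hbne
  rw [hxx, hxAx, Finset.mul_sum]
  apply Finset.sum_le_sum
  intro i _
  by_cases hi : i = σ ⟨0, by omega⟩
  · rw [hi, hczero]; simp
  · nlinarith [hge i hi, sq_nonneg (c i)]

theorem cheeger_easy_direction (n : ℕ) (hn : 2 ≤ n) (w : Matrix (Fin n) (Fin n) ℝ)
    (hsym : ∀ i j, w i j = w j i) (hnn : ∀ i j, 0 ≤ w i j)
    (hdeg : ∀ i, 0 < ∑ j, w i j)
    (L : Matrix (Fin n) (Fin n) ℝ)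
    (hLdef : L = 1 - Matrix.diagonal (fun i => (∑ j, w i j) ^ (-(1 : ℝ) / 2)) * w *
        Matrix.diagonal (fun i => (∑ j, w i j) ^ (-(1 : ℝ) / 2)))
    (hL : L.IsHermitian)
    (σ : Equiv.Perm (Fin n)) (hmono : Monotone (hL.eigenvalues ∘ σ)) :
    ∀ S : Finset (Fin n), S.Nonempty → S ≠ Finset.univ →
      (∑ i ∈ S, ∑ j, w i j) ≤ (∑ i, ∑ j, w i j) / 2 →
      hL.eigenvalues (σ ⟨1, by omega⟩) ≤
        2 * ((∑ i ∈ S, ∑ j ∈ Sᶜ, w i j) / (∑ i ∈ S, ∑ j, w i j)) := by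
  classical
  intro S hS hSne hvol
  set d : Fin n → ℝ := fun i => ∑ j, w i j with hd
  set r : Fin n → ℝ := fun i => d i ^ (-(1:ℝ)/2) with hr
  set s : Fin n → ℝ := fun i => d i ^ ((1:ℝ)/2) with hs
  have hrs : ∀ i, r i * s i = 1 := by
    intro i; rw [hr, hs, ← Real.rpow_add (hdeg i)]; norm_num
  have hss : ∀ i, s i * s i = d i := by
    intro i; rw [hs, ← Real.rpow_add (hdeg i)]; norm_num; rfl
  have hrd : ∀ i, r i * d i = s i := by
    intro i
    show d i ^ (-(1:ℝ)/2) * d i = d i ^ ((1:ℝ)/2)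
    nth_rewrite 2 [← Real.rpow_one (d i)]
    rw [← Real.rpow_add (hdeg i)]; norm_num; rfl
  have hLz : ∀ (z : Fin n → ℝ) i, L.mulVec z i = z i - r i * ∑ j, w i j * (r j * z j) := by
    intro z i
    rw [hLdef, Matrix.sub_mulVec, Pi.sub_apply, Matrix.one_mulVec]
    congr 1
    rw [← Matrix.mulVec_mulVec, ← Matrix.mulVec_mulVec, Matrix.mulVec_diagonal]
    congr 1
    show ∑ j, w i j * ((Matrix.diagonal r).mulVec z j) = _
    refine Finset.sum_congr rfl fun j _ => ?_
    rw [Matrix.mulVec_diagonal]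
  -- quadratic form identity
  have hquad : ∀ y : Fin n → ℝ,
      dotProduct (fun i => s i * y i) (L.mulVec (fun i => s i * y i))
      = ∑ i, ∑ j, (w i j * (y i * y i) - w i j * (y i * y j)) := by
    intro y
    show ∑ i, (s i * y i) * (L.mulVec (fun k => s k * y k) i) = _
    refine Finset.sum_congr rfl fun i _ => ?_
    rw [hLz]
    have hinner : ∑ j, w i j * (r j * (s j * y j)) = ∑ j, w i j * y j := by
      refine Finset.sum_congr rfl fun j _ => ?_
      have h : r j * (s j * y j) = y j := by
        linear_combination (y j) * hrs j
      rw [h]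
    rw [hinner]
    have hsplit : ∑ j, (w i j * (y i * y i) - w i j * (y i * y j))
        = d i * (y i * y i) - y i * ∑ j, w i j * y j := by
      rw [Finset.sum_sub_distrib, ← Finset.sum_mul]
      congr 1
      rw [Finset.mul_sum]
      refine Finset.sum_congr rfl fun j _ => ?_
      ring
    rw [hsplit]
    linear_combination (y i * y i) * hss i - (y i * (∑ j, w i j * y j)) * hrs i
  -- swap lemma
  have hswap : ∀ g : Fin n → Fin n → ℝ,
      ∑ i, ∑ j, w i j * g i j = ∑ i, ∑ j, w i j * g j i := by
    intro g
    rw [Finset.sum_comm]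
    exact Finset.sum_congr rfl fun a _ => Finset.sum_congr rfl fun b _ => by rw [hsym]
  -- PSD
  have hpsd : ∀ z : Fin n → ℝ, 0 ≤ dotProduct z (L.mulVec z) := by
    intro z
    set y : Fin n → ℝ := fun i => r i * z i with hy
    have hz : (fun i => s i * y i) = z := by
      funext i
      show s i * (r i * z i) = z i
      linear_combination (z i) * hrs i
    have h0 := hquad y
    rw [hz] at h0
    rw [h0]
    have e1 := hswap (fun i j => y i * y i)
    have e2 := hswap (fun i j => y i * y j)
    have expand : ∀ i j : Fin n, w i j * (y i - y j)^2
        = w i j * (y i * y i) - w i j * (y i * y j) - w i j * (y j * y i) + w i j * (y j * y j) := by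
      intro i j; ring
    have hR : ∑ i, ∑ j, w i j * (y i - y j)^2
        = (∑ i, ∑ j, w i j * (y i * y i)) - (∑ i, ∑ j, w i j * (y i * y j))
          - (∑ i, ∑ j, w i j * (y j * y i)) + (∑ i, ∑ j, w i j * (y j * y j)) := by
      simp only [expand, Finset.sum_add_distrib, Finset.sum_sub_distrib]
    have hRnn : 0 ≤ ∑ i, ∑ j, w i j * (y i - y j)^2 := by
      refine Finset.sum_nonneg fun i _ => Finset.sum_nonneg fun j _ => ?_
      exact mul_nonneg (hnn i j) (sq_nonneg _)
    have hL1 : ∑ i, ∑ j, (w i j * (y i * y i) - w i j * (y i * y j))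
        = (∑ i, ∑ j, w i j * (y i * y i)) - (∑ i, ∑ j, w i j * (y i * y j)) := by
      simp only [Finset.sum_sub_distrib]
    rw [hL1]
    linarith
  -- eigenvector for 0
  have hLs : L.mulVec s = 0 := by
    funext i
    rw [hLz]
    have h1 : ∑ j, w i j * (r j * s j) = d i := by
      have : ∑ j, w i j * (r j * s j) = ∑ j, w i j := by
        refine Finset.sum_congr rfl fun j _ => ?_
        rw [hrs j, mul_one]
      rw [this]
    rw [h1, hrd]
    simp
  have hs0 : s ≠ 0 := by
    intro h
    have h1 : s ⟨0, by omega⟩ = 0 := by rw [h]; rfl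
    have h2 : 0 < s ⟨0, by omega⟩ := Real.rpow_pos_of_pos (hdeg _) _
    linarith
  -- volumes
  set volS : ℝ := S.sum d with hvolS
  set volC : ℝ := Sᶜ.sum d with hvolC
  have hvolSpos : 0 < volS := Finset.sum_pos (fun i _ => hdeg i) hS
  have hCne : Sᶜ.Nonempty :=
    (Finset.compl_ne_univ_iff_nonempty Sᶜ).mp (by rwa [compl_compl])
  have hvolCpos : 0 < volC := Finset.sum_pos (fun i _ => hdeg i) hCne
  have hsumsplit : volS + volC = ∑ i, d i := Finset.sum_add_sum_compl S d
  have hvolle : volS ≤ volC := by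
    have : volS ≤ (volS + volC) / 2 := by rw [hsumsplit]; exact hvol
    linarith
  set a : ℝ := volS⁻¹ with ha
  set bb : ℝ := volC⁻¹ with hbb
  have hapos : 0 < a := inv_pos.mpr hvolSpos
  have hbpos : 0 < bb := inv_pos.mpr hvolCpos
  have hba : bb ≤ a := by
    rw [ha, hbb]
    exact inv_anti₀ hvolSpos hvolle
  set y : Fin n → ℝ := fun i => if i ∈ S then a else -bb with hy
  set x : Fin n → ℝ := fun i => s i * y i with hx
  set E : ℝ := ∑ i ∈ S, ∑ j ∈ Sᶜ, w i j with hE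
  have hEnn : 0 ≤ E :=
    Finset.sum_nonneg fun i _ => Finset.sum_nonneg fun j _ => hnn i j
  -- orthogonality
  have horth : dotProduct s x = 0 := by
    show ∑ i, s i * (s i * y i) = 0
    have h1 : ∀ i, s i * (s i * y i) = d i * y i := by
      intro i; linear_combination (y i) * hss i
    simp only [h1]
    rw [← Finset.sum_add_sum_compl S (fun i => d i * y i)]
    have h2 : ∑ i ∈ S, d i * y i = volS * a := by
      rw [hvolS]
      show _ = (∑ i ∈ S, d i) * a
      rw [Finset.sum_mul]
      refine Finset.sum_congr rfl fun i hi => ?_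
      have hyi : y i = a := by simp [hy, hi]
      rw [hyi]
    have h3 : ∑ i ∈ Sᶜ, d i * y i = -(volC * bb) := by
      rw [hvolC]
      show _ = -((∑ i ∈ Sᶜ, d i) * bb)
      rw [Finset.sum_mul, ← Finset.sum_neg_distrib]
      refine Finset.sum_congr rfl fun i hi => ?_
      have hyi : y i = -bb := by simp [hy, Finset.mem_compl.mp hi]
      rw [hyi]; ring
    rw [h2, h3, mul_inv_cancel₀ (ne_of_gt hvolSpos), mul_inv_cancel₀ (ne_of_gt hvolCpos)]
    ring
  -- norm
  have hxx : dotProduct x x = a + bb := by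
    show ∑ i, (s i * y i) * (s i * y i) = a + bb
    have h1 : ∀ i, (s i * y i) * (s i * y i) = d i * (y i * y i) := by
      intro i; linear_combination (y i * y i) * hss i
    simp only [h1]
    rw [← Finset.sum_add_sum_compl S (fun i => d i * (y i * y i))]
    have h2 : ∑ i ∈ S, d i * (y i * y i) = a := by
      have e : ∑ i ∈ S, d i * (y i * y i) = (∑ i ∈ S, d i) * (a * a) := by
        rw [Finset.sum_mul]
        refine Finset.sum_congr rfl fun i hi => ?_
        have hyi : y i = a := by simp [hy, hi]
        rw [hyi]
      have e2 : (∑ i ∈ S, d i) = volS := rfl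
      rw [e, e2, ha]
      field_simp
    have h3 : ∑ i ∈ Sᶜ, d i * (y i * y i) = bb := by
      have e : ∑ i ∈ Sᶜ, d i * (y i * y i) = (∑ i ∈ Sᶜ, d i) * (bb * bb) := by
        rw [Finset.sum_mul]
        refine Finset.sum_congr rfl fun i hi => ?_
        have hyi : y i = -bb := by simp [hy, Finset.mem_compl.mp hi]
        rw [hyi]; ring
      have e2 : (∑ i ∈ Sᶜ, d i) = volC := rfl
      rw [e, e2, hbb]
      field_simp
    rw [h2, h3]
  -- energy
  have hxLx : dotProduct x (L.mulVec x) = (a + bb)^2 * E := by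
    have h0 := hquad y
    rw [hx, h0]
    have hEsym : ∑ i ∈ Sᶜ, ∑ j ∈ S, w i j = E := by
      rw [hE, Finset.sum_comm (f := fun i j => w i j)]
      exact Finset.sum_congr rfl fun i _ => Finset.sum_congr rfl fun j _ => hsym j i
    have B1 : ∑ i ∈ S, ∑ j ∈ S, (w i j * (y i * y i) - w i j * (y i * y j)) = 0 := by
      refine Finset.sum_eq_zero fun i hi => Finset.sum_eq_zero fun j hj => ?_
      have hyi : y i = a := by simp [hy, hi]
      have hyj : y j = a := by simp [hy, hj]
      rw [hyi, hyj]; ring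
    have B2 : ∑ i ∈ S, ∑ j ∈ Sᶜ, (w i j * (y i * y i) - w i j * (y i * y j))
        = (a * (a + bb)) * E := by
      rw [hE, Finset.mul_sum]
      refine Finset.sum_congr rfl fun i hi => ?_
      rw [Finset.mul_sum]
      refine Finset.sum_congr rfl fun j hj => ?_
      have hyi : y i = a := by simp [hy, hi]
      have hyj : y j = -bb := by simp [hy, Finset.mem_compl.mp hj]
      rw [hyi, hyj]; ring
    have B3 : ∑ i ∈ Sᶜ, ∑ j ∈ S, (w i j * (y i * y i) - w i j * (y i * y j))
        = (bb * (a + bb)) * E := by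
      rw [← hEsym, Finset.mul_sum]
      refine Finset.sum_congr rfl fun i hi => ?_
      rw [Finset.mul_sum]
      refine Finset.sum_congr rfl fun j hj => ?_
      have hyi : y i = -bb := by simp [hy, Finset.mem_compl.mp hi]
      have hyj : y j = a := by simp [hy, hj]
      rw [hyi, hyj]; ring
    have B4 : ∑ i ∈ Sᶜ, ∑ j ∈ Sᶜ, (w i j * (y i * y i) - w i j * (y i * y j)) = 0 := by
      refine Finset.sum_eq_zero fun i hi => Finset.sum_eq_zero fun j hj => ?_
      have hyi : y i = -bb := by simp [hy, Finset.mem_compl.mp hi]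
      have hyj : y j = -bb := by simp [hy, Finset.mem_compl.mp hj]
      rw [hyi, hyj]; ring
    have hsplit : ∑ i, ∑ j, (w i j * (y i * y i) - w i j * (y i * y j))
        = (∑ i ∈ S, ∑ j ∈ S, (w i j * (y i * y i) - w i j * (y i * y j)))
        + (∑ i ∈ S, ∑ j ∈ Sᶜ, (w i j * (y i * y i) - w i j * (y i * y j)))
        + ((∑ i ∈ Sᶜ, ∑ j ∈ S, (w i j * (y i * y i) - w i j * (y i * y j)))
        + (∑ i ∈ Sᶜ, ∑ j ∈ Sᶜ, (w i j * (y i * y i) - w i j * (y i * y j)))) := by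
      rw [← Finset.sum_add_sum_compl S
        (fun i => ∑ j, (w i j * (y i * y i) - w i j * (y i * y j)))]
      congr 1
      · rw [← Finset.sum_add_distrib]
        exact Finset.sum_congr rfl fun i _ =>
          (Finset.sum_add_sum_compl S fun j => (w i j * (y i * y i) - w i j * (y i * y j))).symm
      · rw [← Finset.sum_add_distrib]
        exact Finset.sum_congr rfl fun i _ =>
          (Finset.sum_add_sum_compl S fun j => (w i j * (y i * y i) - w i j * (y i * y j))).symm
    rw [hsplit, B1, B2, B3, B4]
    ring
  -- final assembly
  have hmain := second_eig_bound hn L hL σ hmono hpsd s x hs0 hLs horth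
  rw [hxx, hxLx] at hmain
  have habpos : 0 < a + bb := by linarith
  have h1 : hL.eigenvalues (σ ⟨1, by omega⟩) ≤ (a + bb) * E := by
    have h2 : (a + bb)^2 * E = ((a + bb) * E) * (a + bb) := by ring
    rw [h2] at hmain
    exact le_of_mul_le_mul_right hmain habpos
  have hgoal : (∑ i ∈ S, ∑ j ∈ Sᶜ, w i j) / (∑ i ∈ S, ∑ j, w i j) = E * a := by
    show E / volS = E * a
    rw [div_eq_mul_inv, ha]
  calc hL.eigenvalues (σ ⟨1, by omega⟩) ≤ (a + bb) * E := h1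
    _ ≤ 2 * (E * a) := by nlinarith [mul_nonneg (sub_nonneg.mpr hba) hEnn]
    _ = 2 * ((∑ i ∈ S, ∑ j ∈ Sᶜ, w i j) / (∑ i ∈ S, ∑ j, w i j)) := by rw [hgoal]
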